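/- arXiv:2105.04287 — 5 statements merged into one kernel-verified Lean document; each statement's English description precedes it below -/
import Mathlib

section
/- If f is a log-concave probability density on the real line with distribution function F, then the ratio x ↦ f(x)/F(x) is non-increasing on the set {x : 0 < F(x) < 1}, and the ratio x ↦ f(x)/(1 - F(x)) is non-decreasing on that set. -/
open MeasureTheory Set

lemma logconcave_key (f : ℝ → ℝ) (hf0 : ∀ x, 0 ≤ f x)
    (hconc : ConcaveOn ℝ {x | 0 < f x} (fun x => Real.log (f x)))
    {t x y : ℝ} (htx : t ≤ x) (hxy : x ≤ y) :
    f t * f y ≤ f x * f (t + y - x) := by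
  rcases eq_or_lt_of_le (hf0 t) with ht | ht
  · rw [← ht, zero_mul]; exact mul_nonneg (hf0 x) (hf0 _)
  rcases eq_or_lt_of_le (hf0 y) with hy | hy
  · rw [← hy, mul_zero]; exact mul_nonneg (hf0 x) (hf0 _)
  rcases eq_or_lt_of_le (htx.trans hxy) with hty | hty
  · have hxt : x = t := le_antisymm (hxy.trans hty.ge) htx
    subst hxt
    have h : x + y - x = y := by ring
    rw [h]
  · set a := (y - x) / (y - t) with ha_def
    set b := (x - t) / (y - t) with hb_def
    have hpos : (0:ℝ) < y - t := sub_pos.mpr hty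
    have hne : y - t ≠ 0 := hpos.ne'
    have ha : 0 ≤ a := div_nonneg (by linarith) hpos.le
    have hb : 0 ≤ b := div_nonneg (by linarith) hpos.le
    have hab : a + b = 1 := by
      rw [ha_def, hb_def, ← add_div, show y - x + (x - t) = y - t from by ring, div_self hne]
    have hxs : a • t + b • y = x := by
      simp only [smul_eq_mul, ha_def, hb_def]; field_simp; ring
    have hzs : b • t + a • y = t + y - x := by
      simp only [smul_eq_mul, ha_def, hb_def]; field_simp; ring
    have hts : t ∈ {x | 0 < f x} := ht
    have hys : y ∈ {x | 0 < f x} := hy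
    have hmemx : 0 < f x := by
      have := hconc.1 hts hys ha hb hab; rwa [hxs] at this
    have hmemz : 0 < f (t + y - x) := by
      have := hconc.1 hts hys hb ha (by linarith); rwa [hzs] at this
    have h1 := hconc.2 hts hys ha hb hab
    have h2 := hconc.2 hts hys hb ha (by linarith)
    rw [hxs] at h1; rw [hzs] at h2
    simp only [smul_eq_mul] at h1 h2
    have hsum : Real.log (f t) + Real.log (f y)
        ≤ Real.log (f x) + Real.log (f (t + y - x)) := by
      have hh := add_le_add h1 h2
      have heq : a * Real.log (f t) + b * Real.log (f y) +
          (b * Real.log (f t) + a * Real.log (f y)) =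
          (a + b) * (Real.log (f t) + Real.log (f y)) := by ring
      rw [heq, hab, one_mul] at hh
      exact hh
    have h := Real.exp_le_exp.mpr hsum
    rwa [Real.exp_add, Real.exp_add, Real.exp_log ht, Real.exp_log hy,
      Real.exp_log hmemx, Real.exp_log hmemz] at h

lemma shift_setIntegral (f : ℝ → ℝ) (c : ℝ) (s : Set ℝ) :
    ∫ t in (· + c) ⁻¹' s, f (t + c) = ∫ u in s, f u :=
  (measurePreserving_add_right volume c).setIntegral_preimage_emb
    (measurableEmbedding_addRight c) f s

/-- If `f` is a log-concave probability density on ℝ with distribution function `F`,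
then `f/F` is non-increasing and `f/(1-F)` is non-decreasing on `{x | 0 < F x < 1}`. -/
theorem logconcave_hazard_monotone
    (f F : ℝ → ℝ)
    (hf0 : ∀ x, 0 ≤ f x)
    (hdens : (∫ x, f x) = 1)
    (hconc : ConcaveOn ℝ {x | 0 < f x} (fun x => Real.log (f x)))
    (hF : ∀ x, F x = ∫ t in Set.Iic x, f t) :
    AntitoneOn (fun x => f x / F x) {x | 0 < F x ∧ F x < 1} ∧
    MonotoneOn (fun x => f x / (1 - F x)) {x | 0 < F x ∧ F x < 1} := by
  have hint : Integrable f := by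
    by_contra h
    rw [integral_undef h] at hdens
    exact one_ne_zero hdens.symm
  have htail : ∀ x : ℝ, 1 - F x = ∫ t in Ioi x, f t := by
    intro x
    have h := integral_add_compl (measurableSet_Iic (a := x)) hint
    rw [compl_Iic, hdens] at h
    rw [hF x]
    linarith
  have key1 : ∀ {x y : ℝ}, x ≤ y → f y * F x ≤ f x * F y := by
    intro x y hxy
    have hshift : Integrable (fun t => f (t + (y - x))) :=
      (measurePreserving_add_right volume (y - x)).integrable_comp_emb (measurableEmbedding_addRight (y - x)) |>.mpr hint
    calc f y * F x = ∫ t in Iic x, f y * f t := by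
          rw [hF x, integral_const_mul]
      _ ≤ ∫ t in Iic x, f x * f (t + (y - x)) := by
          apply setIntegral_mono_on ((hint.const_mul _).integrableOn)
            ((hshift.const_mul _).integrableOn) measurableSet_Iic
          intro t ht
          have h := logconcave_key f hf0 hconc (ht : t ≤ x) hxy
          have he : t + y - x = t + (y - x) := by ring
          rw [he] at h
          linarith [mul_comm (f y) (f t)]
      _ = f x * F y := by
          rw [integral_const_mul, hF y]
          congr 1
          have h := shift_setIntegral f (y - x) (Iic y)
          rwa [preimage_add_const_Iic, show y - (y - x) = x by ring] at h
  have key2 : ∀ {x y : ℝ}, x ≤ y → f x * (1 - F y) ≤ f y * (1 - F x) := by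
    intro x y hxy
    have hshift : Integrable (fun t => f (t + (x - y))) :=
      (measurePreserving_add_right volume (x - y)).integrable_comp_emb (measurableEmbedding_addRight (x - y)) |>.mpr hint
    calc f x * (1 - F y) = ∫ t in Ioi y, f x * f t := by
          rw [htail y, integral_const_mul]
      _ ≤ ∫ t in Ioi y, f y * f (t + (x - y)) := by
          apply setIntegral_mono_on ((hint.const_mul _).integrableOn)
            ((hshift.const_mul _).integrableOn) measurableSet_Ioi
          intro t ht
          have h := logconcave_key f hf0 hconc hxy (le_of_lt ht)
          have he : x + t - y = t + (x - y) := by ring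
          rw [he] at h
          linarith [mul_comm (f x) (f t)]
      _ = f y * (1 - F x) := by
          rw [integral_const_mul, htail x]
          congr 1
          have h := shift_setIntegral f (x - y) (Ioi x)
          rwa [preimage_add_const_Ioi, show x - (x - y) = y by ring] at h
  constructor
  · intro a ha b hb hab
    simp only [mem_setOf_eq] at ha hb
    rw [div_le_div_iff₀ hb.1 ha.1]
    exact key1 hab
  · intro a ha b hb hab
    simp only [mem_setOf_eq] at ha hb
    rw [div_le_div_iff₀ (by linarith [ha.2]) (by linarith [hb.2])]
    exact key2 hab
end

section
/- Let f be a log-concave probability density with distribution function F, and let m = F^{-1}(1/2) be a median. Then for every x ∈ ℝ, f(x) ≥ 2 f(m) · min(F(x), 1 - F(x)). -/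
open MeasureTheory Set Real

-- helper: integrability of exp (c*(t-x)) on Iic x
lemma exp_shift_integrableOn (c x : ℝ) (hc : 0 < c) :
    MeasureTheory.IntegrableOn (fun t : ℝ => Real.exp (c * (t - x))) (Set.Iic x) := by
  have A : MeasurableEmbedding (fun t : ℝ => -t) :=
    (Homeomorph.neg ℝ).measurableEmbedding
  have h0 : MeasureTheory.IntegrableOn (fun s : ℝ => Real.exp (-c * s)) (Set.Ioi (-x)) :=
    exp_neg_integrableOn_Ioi (-x) hc
  have h1 := (A.integrableOn_map_iff (f := fun s : ℝ => Real.exp (-c * s))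
    (μ := volume) (s := Set.Ioi (-x)))
  rw [Measure.map_neg_eq_self] at h1
  have h2 := h1.1 h0
  have h2' : IntegrableOn (fun t : ℝ => Real.exp (c * t)) (Iio x) := by
    simpa [Function.comp_def, mul_comm, neg_mul, mul_neg, neg_neg] using h2
  have h3 : IntegrableOn (fun t : ℝ => Real.exp (c * t)) (Iic x) :=
    (integrableOn_Iic_iff_integrableOn_Iio (by simp)).2 h2'
  have heq : (fun t : ℝ => Real.exp (c * (t - x)))
      = fun t => Real.exp (c * t) * Real.exp (-(c * x)) := by
    funext t; rw [← Real.exp_add]; ring_nf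
  rw [heq]
  exact h3.mul_const _

lemma exp_shift_integral (c x : ℝ) (hc : 0 < c) :
    (∫ t in Set.Iic x, Real.exp (c * (t - x))) = 1 / c := by
  have step1 : (∫ t in Set.Iic x, Real.exp (c * (t - x)))
      = ∫ t in Set.Iic x, (fun s => Real.exp (-(c * s)) * Real.exp (-(c * x))) (-t) := by
    apply setIntegral_congr_fun measurableSet_Iic
    intro t _
    simp only
    rw [← Real.exp_add]
    ring_nf
  rw [step1]
  have step15 := integral_comp_neg_Iic x (fun s => Real.exp (-(c * s)) * Real.exp (-(c * x)))
  rw [step15, integral_mul_const]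
  have step2 : (∫ s in Set.Ioi (-x), Real.exp (-(c * s)))
      = c⁻¹ * Real.exp (c * x) := by
    have := integral_comp_mul_left_Ioi (fun u => Real.exp (-u)) (-x) hc
    simp only [smul_eq_mul] at this
    rw [this, integral_exp_neg_Ioi]
    ring_nf
  rw [step2, mul_assoc, ← Real.exp_add]
  simp

lemma exp_shift_integral_Ioc (c x m : ℝ) (hc : 0 < c) (hxm : x ≤ m) :
    (∫ t in Set.Ioc x m, Real.exp (c * (t - x))) = (Real.exp (c * (m - x)) - 1) / c := by
  rw [← intervalIntegral.integral_of_le hxm]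
  have h1 : (∫ t in x..m, Real.exp (c * (t - x)))
      = ∫ u in x - x..m - x, Real.exp (c * u) :=
    intervalIntegral.integral_comp_sub_right (fun u => Real.exp (c * u)) x
  rw [h1]
  have h2 : (∫ u in x - x..m - x, Real.exp (c * u))
      = c⁻¹ • ∫ v in c * (x - x)..c * (m - x), Real.exp v :=
    intervalIntegral.integral_comp_mul_left Real.exp hc.ne'
  rw [h2, integral_exp]
  simp only [sub_self, mul_zero, Real.exp_zero, smul_eq_mul]
  ring

set_option maxHeartbeats 1000000 in
lemma logconcave_aux (f : ℝ → ℝ) (m : ℝ) (hf0 : ∀ x, 0 ≤ f x)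
    (hint : MeasureTheory.IntegrableOn f (Set.Iic m))
    (hconc : ConcaveOn ℝ {x | 0 < f x} (fun x => Real.log (f x)))
    (hm : (∫ t in Set.Iic m, f t) = 1 / 2) :
    ∀ x ≤ m, 2 * f m * (∫ t in Set.Iic x, f t) ≤ f x := by
  intro x hx
  set Fx := ∫ t in Set.Iic x, f t with hFxdef
  have hIx : IntegrableOn f (Iic x) := hint.mono_set (Iic_subset_Iic.2 hx)
  have hIoc : IntegrableOn f (Ioc x m) := hint.mono_set Ioc_subset_Iic_self
  have hsplit : Fx + (∫ t in Ioc x m, f t) = 1 / 2 := by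
    rw [hFxdef, ← setIntegral_union (Iic_disjoint_Ioc le_rfl) measurableSet_Ioc hIx hIoc,
      Iic_union_Ioc_eq_Iic hx]
    exact hm
  have hFx0 : 0 ≤ Fx := setIntegral_nonneg measurableSet_Iic (fun t _ => hf0 t)
  have hIoc0 : 0 ≤ ∫ t in Ioc x m, f t :=
    setIntegral_nonneg measurableSet_Ioc (fun t _ => hf0 t)
  have hFhalf : Fx ≤ 1 / 2 := by linarith
  clear_value Fx
  rcases eq_or_lt_of_le (hf0 m) with hb | hb
  · rw [← hb]
    simpa using hf0 x
  rcases le_or_gt (f m) (f x) with hab | hab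
  · nlinarith [hf0 x]
  rcases eq_or_lt_of_le (hf0 x) with ha | ha
  · -- f x = 0
    have hxm : x < m := hx.lt_of_ne (by rintro rfl; exact lt_irrefl _ hab)
    have hzero : ∀ t ∈ Iic x, f t = 0 := by
      intro t ht
      by_contra h
      have htpos : 0 < f t := lt_of_le_of_ne (hf0 t) (Ne.symm h)
      have hseg : segment ℝ t m ⊆ {x | 0 < f x} :=
        hconc.1.segment_subset htpos hb
      have hxin : x ∈ segment ℝ t m := by
        rw [segment_eq_Icc (le_trans ht hx)]
        exact ⟨ht, hx⟩
      have hpos : (0:ℝ) < f x := hseg hxin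
      rw [← ha] at hpos
      exact lt_irrefl 0 hpos
    have hFx : Fx = 0 := by
      rw [hFxdef]
      rw [setIntegral_congr_fun measurableSet_Iic hzero]
      simp
    rw [hFx, ← ha]
    simp
  · -- main case: 0 < f x < f m
    have hxm : x < m := hx.lt_of_ne (by rintro rfl; exact lt_irrefl _ hab)
    have hmx : (0:ℝ) < m - x := by linarith
    set c := (Real.log (f m) - Real.log (f x)) / (m - x) with hcdef
    have hlogs : Real.log (f x) < Real.log (f m) := Real.log_lt_log ha hab
    have hcpos : 0 < c := div_pos (by linarith) hmx
    have hcd : c * (m - x) = Real.log (f m) - Real.log (f x) := by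
      rw [hcdef]; field_simp
    clear_value c
    -- pointwise upper bound on Iic x
    have hptA : ∀ t ∈ Iic x, f t ≤ f x * Real.exp (c * (t - x)) := by
      intro t ht
      rcases eq_or_lt_of_le (hf0 t) with h0 | h0
      · rw [← h0]; positivity
      rcases eq_or_lt_of_le (mem_Iic.1 ht) with heq | hlt
      · subst heq; simp
      have hmt : (0:ℝ) < m - t := by linarith
      set lam := (m - x) / (m - t) with hlamdef
      set mu := (x - t) / (m - t) with hmudef
      have hlam0 : 0 ≤ lam := by positivity
      have hmu0 : 0 ≤ mu := by
        rw [hmudef]; exact div_nonneg (by linarith) hmt.le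
      have hsum : lam + mu = 1 := by
        rw [hlamdef, hmudef]; field_simp; ring
      have key := hconc.2 (show t ∈ {x | 0 < f x} from h0)
        (show m ∈ {x | 0 < f x} from hb) hlam0 hmu0 hsum
      simp only [smul_eq_mul] at key
      have hpt : lam * t + mu * m = x := by
        rw [hlamdef, hmudef]; field_simp; ring
      rw [hpt] at key
      have hlamp : 0 < lam := div_pos hmx hmt
      have hL : Real.log (f t) ≤ (Real.log (f x) - mu * Real.log (f m)) / lam :=
        (le_div_iff₀ hlamp).2 (by nlinarith [key])
      have heq2 : (Real.log (f x) - mu * Real.log (f m)) / lam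
          = Real.log (f x) + c * (t - x) := by
        rw [hlamdef, hmudef, hcdef]; field_simp; ring
      rw [heq2] at hL
      calc f t = Real.exp (Real.log (f t)) := (Real.exp_log h0).symm
        _ ≤ Real.exp (Real.log (f x) + c * (t - x)) := Real.exp_le_exp.2 hL
        _ = f x * Real.exp (c * (t - x)) := by rw [Real.exp_add, Real.exp_log ha]
    -- pointwise lower bound on Ioc x m
    have hptB : ∀ t ∈ Ioc x m, f x * Real.exp (c * (t - x)) ≤ f t := by
      intro t ht
      obtain ⟨ht1, ht2⟩ := ht
      have htS : (0:ℝ) < f t := hconc.1.segment_subset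
        (show x ∈ {x | 0 < f x} from ha) (show m ∈ {x | 0 < f x} from hb)
        (by rw [segment_eq_Icc hxm.le]; exact ⟨ht1.le, ht2⟩)
      set lam := (m - t) / (m - x) with hlamdef
      set mu := (t - x) / (m - x) with hmudef
      have hlam0 : 0 ≤ lam := by
        rw [hlamdef]; apply div_nonneg (by linarith) hmx.le
      have hmu0 : 0 ≤ mu := by
        rw [hmudef]; apply div_nonneg (by linarith) hmx.le
      have hsum : lam + mu = 1 := by
        rw [hlamdef, hmudef]; field_simp; ring
      have key := hconc.2 (show x ∈ {x | 0 < f x} from ha)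
        (show m ∈ {x | 0 < f x} from hb) hlam0 hmu0 hsum
      simp only [smul_eq_mul] at key
      have hpt : lam * x + mu * m = t := by
        rw [hlamdef, hmudef]; field_simp; ring
      rw [hpt] at key
      have heq2 : lam * Real.log (f x) + mu * Real.log (f m)
          = Real.log (f x) + c * (t - x) := by
        rw [hlamdef, hmudef, hcdef]; field_simp; ring
      rw [heq2] at key
      calc f x * Real.exp (c * (t - x))
          = Real.exp (Real.log (f x) + c * (t - x)) := by
            rw [Real.exp_add, Real.exp_log ha]
        _ ≤ Real.exp (Real.log (f t)) := Real.exp_le_exp.2 key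
        _ = f t := Real.exp_log htS
    -- integrate the bounds
    have hExpInt : IntegrableOn (fun t : ℝ => Real.exp (c * (t - x))) (Iic x) :=
      exp_shift_integrableOn c x hcpos
    have claimA : Fx ≤ f x / c := by
      have h := setIntegral_mono_on hIx (hExpInt.const_mul (f x)) measurableSet_Iic hptA
      rw [MeasureTheory.integral_const_mul, exp_shift_integral c x hcpos,
        mul_one_div] at h
      rw [hFxdef]
      exact h
    have hExpIntOc : IntegrableOn (fun t : ℝ => f x * Real.exp (c * (t - x))) (Ioc x m) := by
      apply Continuous.integrableOn_Ioc
      continuity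
    have claimB : (f m - f x) / c ≤ 1 / 2 - Fx := by
      have h := setIntegral_mono_on hExpIntOc hIoc measurableSet_Ioc hptB
      rw [MeasureTheory.integral_const_mul, exp_shift_integral_Ioc c x m hcpos hxm.le] at h
      have hval : f x * ((Real.exp (c * (m - x)) - 1) / c) = (f m - f x) / c := by
        have : Real.exp (c * (m - x)) = f m / f x := by
          rw [hcd, Real.exp_sub, Real.exp_log hb, Real.exp_log ha]
        rw [this]
        field_simp
      rw [hval] at h
      linarith
    -- combine
    have hA' : Fx * c ≤ f x := (le_div_iff₀ hcpos).1 claimA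
    have hB' : f m - f x ≤ (1 / 2 - Fx) * c := (div_le_iff₀ hcpos).1 claimB
    clear hptA hptB hExpInt hExpIntOc claimA claimB hsplit hIoc0 hIx hIoc hint hconc hm hFxdef hcd hcdef
    rcases le_total c (2 * f m) with hcase | hcase
    · have hhalf : (0:ℝ) ≤ 1 / 2 - Fx := by linarith
      have hprod : 0 ≤ (2 * f m - c) * (1 / 2 - Fx) :=
        mul_nonneg (by linarith) hhalf
      nlinarith [hprod]
    · have hprod : 0 ≤ (c - 2 * f m) * Fx := mul_nonneg (by linarith) hFx0
      nlinarith [hprod]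

/-- If `f` is a log-concave probability density with distribution function `F` and median `m`,
then `f x ≥ 2 f(m) · min(F x, 1 - F x)` for every `x`. -/
theorem logconcave_density_ge_min_cdf
    (f F : ℝ → ℝ) (m : ℝ)
    (hf0 : ∀ x, 0 ≤ f x)
    (hdens : (∫ x, f x) = 1)
    (hconc : ConcaveOn ℝ {x | 0 < f x} (fun x => Real.log (f x)))
    (hF : ∀ x, F x = ∫ t in Set.Iic x, f t)
    (hm : F m = 1 / 2) :
    ∀ x : ℝ, 2 * f m * min (F x) (1 - F x) ≤ f x := by
  intro x
  have hInt : Integrable f := by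
    by_contra h
    rw [integral_undef h] at hdens
    norm_num at hdens
  have h2m : 0 ≤ 2 * f m := by
    have := hf0 m; linarith
  rcases le_total x m with hxm | hmx
  · have h1 := logconcave_aux f m hf0 hInt.integrableOn hconc
      (by rw [← hF m]; exact hm) x hxm
    calc 2 * f m * min (F x) (1 - F x) ≤ 2 * f m * F x :=
          mul_le_mul_of_nonneg_left (min_le_left _ _) h2m
      _ ≤ f x := by rw [hF x]; exact h1
  · -- reflection
    have hgInt : Integrable (fun y : ℝ => f (-y)) := by
      have h := (Measure.measurePreserving_neg (volume : Measure ℝ)).integrable_comp_emb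
        (Homeomorph.neg ℝ).measurableEmbedding (g := f)
      exact h.2 hInt
    have hgconc : ConcaveOn ℝ {y : ℝ | 0 < f (-y)} (fun y => Real.log (f (-y))) := by
      have h := hconc.comp_affineMap (-(LinearMap.id : ℝ →ₗ[ℝ] ℝ)).toAffineMap
      have hset : (⇑(-(LinearMap.id : ℝ →ₗ[ℝ] ℝ)).toAffineMap ⁻¹' {x | 0 < f x})
          = {y : ℝ | 0 < f (-y)} := by
        ext y
        simp [LinearMap.coe_toAffineMap, LinearMap.neg_apply, LinearMap.id_apply]
      have hfun : ((fun x => Real.log (f x)) ∘ ⇑(-(LinearMap.id : ℝ →ₗ[ℝ] ℝ)).toAffineMap)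
          = fun y => Real.log (f (-y)) := by
        ext y
        simp [Function.comp, LinearMap.coe_toAffineMap, LinearMap.neg_apply, LinearMap.id_apply]
      rw [hset, hfun] at h
      exact h
    have hsum : ∀ y : ℝ, (∫ t in Set.Iic y, f t) + (∫ t in Set.Ioi y, f t) = 1 := by
      intro y
      rw [intervalIntegral.integral_Iic_add_Ioi hInt.integrableOn hInt.integrableOn, hdens]
    have hrefl : ∀ y : ℝ, (∫ t in Set.Iic (-y), f (-t)) = ∫ t in Set.Ioi y, f t := by
      intro y
      have := integral_comp_neg_Iic (-y) f
      simpa using this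
    have hmed : (∫ t in Set.Iic (-m), f (-t)) = 1 / 2 := by
      rw [hrefl m]
      have h2 := hsum m
      have h3 : (∫ t in Set.Iic m, f t) = 1 / 2 := by rw [← hF m]; exact hm
      linarith
    have key := logconcave_aux (fun y : ℝ => f (-y)) (-m) (fun y => hf0 (-y))
      hgInt.integrableOn hgconc hmed (-x) (neg_le_neg hmx)
    simp only [neg_neg] at key
    -- key : 2 * f m * (∫ t in Iic (-x), f (-t)) ≤ f x
    have h3 : (∫ t in Set.Iic (-x), f (-t)) = 1 - F x := by
      rw [hrefl x, hF x]
      have := hsum x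
      linarith
    rw [h3] at key
    calc 2 * f m * min (F x) (1 - F x) ≤ 2 * f m * (1 - F x) :=
          mul_le_mul_of_nonneg_left (min_le_right _ _) h2m
      _ ≤ f x := key
end

section
/- Let f be a log-concave probability density on ℝ and let x, y ∈ ℝ with 0 < f(x) ≤ f(y) and x ≠ y. Then f(y) ≤ (1 + log(f(y)/f(x))) / |y - x|. -/
open MeasureTheory Set

/-- `∫_0^1 exp (-(c t)) dt ≥ 1/(1+c)` for `c ≥ 0`. -/
lemma aux_exp_integral (c : ℝ) (hc : 0 ≤ c) :
    1 / (1 + c) ≤ ∫ t in (0:ℝ)..1, Real.exp (-(c * t)) := by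
  rcases eq_or_lt_of_le hc with h0 | h0
  · subst h0
    simp
  · have hderiv : ∀ t ∈ Set.uIcc (0:ℝ) 1,
        HasDerivAt (fun t => Real.exp (-(c * t)) / (-c)) (Real.exp (-(c * t))) t := by
      intro t _
      have h1 : HasDerivAt (fun t : ℝ => -(c * t)) (-c) t := by
        simpa using ((hasDerivAt_id t).const_mul (-c))
      have h2 : HasDerivAt (fun t : ℝ => Real.exp (-(c * t)))
          (Real.exp (-(c * t)) * (-c)) t := (Real.hasDerivAt_exp _).comp t h1
      have h3 := h2.div_const (-c)
      have : Real.exp (-(c * t)) * (-c) / (-c) = Real.exp (-(c * t)) := by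
        field_simp
      rwa [this] at h3
    have hint : IntervalIntegrable (fun t => Real.exp (-(c * t))) volume 0 1 :=
      (Real.continuous_exp.comp ((continuous_const.mul continuous_id).neg)).intervalIntegrable 0 1
    have hval : (∫ t in (0:ℝ)..1, Real.exp (-(c * t)))
        = Real.exp (-(c * 1)) / (-c) - Real.exp (-(c * 0)) / (-c) :=
      intervalIntegral.integral_eq_sub_of_hasDerivAt hderiv hint
    rw [hval]
    have hE : Real.exp (-c) * (1 + c) ≤ 1 := by
      have h1 : 1 + c ≤ Real.exp c := by
        have := Real.add_one_le_exp c; linarith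
      have h2 : Real.exp (-c) * (1 + c) ≤ Real.exp (-c) * Real.exp c :=
        mul_le_mul_of_nonneg_left h1 (Real.exp_pos _).le
      rwa [← Real.exp_add, neg_add_cancel, Real.exp_zero] at h2
    have h1c : (0:ℝ) < 1 + c := by linarith
    have heq : Real.exp (-(c * 1)) / (-c) - Real.exp (-(c * 0)) / (-c)
        = (1 - Real.exp (-c)) / c := by
      simp only [mul_one, mul_zero, neg_zero, Real.exp_zero, div_sub_div_same, div_neg,
        ← neg_div, neg_sub]
      ring
    rw [heq, div_le_div_iff₀ h1c h0]
    nlinarith [hE]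

/-- For a log-concave probability density `f` and points `x ≠ y` with `0 < f x ≤ f y`,
one has `f y ≤ (1 + log(f y / f x)) / |y - x|`. -/
theorem logconcave_mode_bound
    (f : ℝ → ℝ) (x y : ℝ)
    (hf0 : ∀ z, 0 ≤ f z)
    (hdens : (∫ z, f z) = 1)
    (hconc : ConcaveOn ℝ {z | 0 < f z} (fun z => Real.log (f z)))
    (hx : 0 < f x) (hxy : f x ≤ f y) (hne : x ≠ y) :
    f y ≤ (1 + Real.log (f y / f x)) / |y - x| := by
  have hy : 0 < f y := lt_of_lt_of_le hx hxy
  set c : ℝ := Real.log (f y / f x) with hc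
  have hclog : c = Real.log (f y) - Real.log (f x) := Real.log_div hy.ne' hx.ne'
  have hc0 : 0 ≤ c := Real.log_nonneg ((one_le_div hx).mpr hxy)
  have hd : (0:ℝ) < |y - x| := abs_pos.mpr (sub_ne_zero.mpr (Ne.symm hne))
  have hR : x - y ≠ 0 := sub_ne_zero.mpr hne
  -- f is integrable
  have hfi : Integrable f := by
    by_contra h
    rw [MeasureTheory.integral_undef h] at hdens
    norm_num at hdens
  -- the rescaled function g
  set g : ℝ → ℝ := fun t => f (y + (x - y) * t) with hg
  have hgi : Integrable g := by
    have h1 : Integrable (fun u => f (y + u)) := hfi.comp_add_left y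
    simpa [hg] using h1.comp_mul_left' hR
  have hgint : (∫ t, g t) = |y - x|⁻¹ := by
    have h1 : (∫ t, (fun u => f (y + u)) ((x - y) * t)) = |(x - y)⁻¹| • ∫ u, f (y + u) :=
      MeasureTheory.Measure.integral_comp_mul_left (fun u => f (y + u)) (x - y)
    have h2 : (∫ u, f (y + u)) = ∫ z, f z :=
      MeasureTheory.integral_add_left_eq_self (μ := volume) f y
    rw [h2, hdens] at h1
    simpa [hg, abs_inv, abs_sub_comm x y] using h1
  -- pointwise lower bound on [0,1]
  have hpt : ∀ t ∈ Set.Ioc (0:ℝ) 1, f y * Real.exp (-(c * t)) ≤ g t := by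
    intro t ht
    have ht0 : (0:ℝ) ≤ t := ht.1.le
    have ht1 : (0:ℝ) ≤ 1 - t := by linarith [ht.2]
    have hsum : (1 - t) + t = 1 := by ring
    have hmy : y ∈ {z | 0 < f z} := hy
    have hmx : x ∈ {z | 0 < f z} := hx
    have hmem : (1 - t) • y + t • x ∈ {z | 0 < f z} := hconc.1 hmy hmx ht1 ht0 hsum
    have hineq := hconc.2 hmy hmx ht1 ht0 hsum
    have hzeq : (1 - t) • y + t • x = y + (x - y) * t := by
      simp only [smul_eq_mul]; ring
    rw [hzeq] at hmem hineq
    have hpos : 0 < f (y + (x - y) * t) := hmem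
    have hineq' : (1 - t) * Real.log (f y) + t * Real.log (f x)
        ≤ Real.log (f (y + (x - y) * t)) := by simpa using hineq
    have heq2 : Real.log (f y) - c * t
        = (1 - t) * Real.log (f y) + t * Real.log (f x) := by rw [hclog]; ring
    have hlog : Real.log (f y) - c * t ≤ Real.log (f (y + (x - y) * t)) := by
      rw [heq2]; exact hineq'
    have h5 := Real.exp_le_exp.mpr hlog
    rw [Real.exp_sub, Real.exp_log hy, Real.exp_log hpos] at h5
    have h6 : f y * Real.exp (-(c * t)) = f y / Real.exp (c * t) := by
      rw [Real.exp_neg]; ring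
    rw [h6]
    exact h5

  -- integral comparison
  have hmono : (∫ t in Set.Ioc (0:ℝ) 1, f y * Real.exp (-(c * t)))
      ≤ ∫ t in Set.Ioc (0:ℝ) 1, g t := by
    refine MeasureTheory.setIntegral_mono_on ?_ ?_ measurableSet_Ioc hpt
    · exact ((continuous_const.mul (Real.continuous_exp.comp
        ((continuous_const.mul continuous_id).neg))).integrableOn_Ioc)
    · exact hgi.integrableOn
  have hle : (∫ t in Set.Ioc (0:ℝ) 1, g t) ≤ ∫ t, g t :=
    MeasureTheory.setIntegral_le_integral hgi (Filter.Eventually.of_forall fun t => hf0 _)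
  -- compute the lower integral
  have hcomp : (∫ t in Set.Ioc (0:ℝ) 1, f y * Real.exp (-(c * t)))
      = f y * ∫ t in (0:ℝ)..1, Real.exp (-(c * t)) := by
    rw [← intervalIntegral.integral_of_le (by norm_num : (0:ℝ) ≤ 1),
      intervalIntegral.integral_const_mul]
  have hkey : f y * (1 / (1 + c)) ≤ |y - x|⁻¹ := by
    have h1 := aux_exp_integral c hc0
    have h2 : f y * (1 / (1 + c)) ≤ f y * ∫ t in (0:ℝ)..1, Real.exp (-(c * t)) :=
      mul_le_mul_of_nonneg_left h1 hy.le
    calc f y * (1 / (1 + c)) ≤ f y * ∫ t in (0:ℝ)..1, Real.exp (-(c * t)) := h2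
      _ = ∫ t in Set.Ioc (0:ℝ) 1, f y * Real.exp (-(c * t)) := hcomp.symm
      _ ≤ ∫ t in Set.Ioc (0:ℝ) 1, g t := hmono
      _ ≤ ∫ t, g t := hle
      _ = |y - x|⁻¹ := hgint
  -- conclude
  have h1c : (0:ℝ) < 1 + c := by linarith
  rw [le_div_iff₀ hd]
  have h2 : f y * |y - x| * (1 / (1 + c)) ≤ |y - x|⁻¹ * |y - x| := by
    calc f y * |y - x| * (1 / (1 + c)) = f y * (1 / (1 + c)) * |y - x| := by ring
      _ ≤ |y - x|⁻¹ * |y - x| := mul_le_mul_of_nonneg_right hkey hd.le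
  rw [inv_mul_cancel₀ hd.ne'] at h2
  have h3 := mul_le_mul_of_nonneg_right h2 h1c.le
  calc f y * |y - x| = f y * |y - x| * (1 / (1 + c)) * (1 + c) := by field_simp
    _ ≤ 1 * (1 + c) := h3
    _ = 1 + c := one_mul _
end

section
/- Let f be a log-concave probability density with distribution function G and suppose f(x) ≥ ω · min(G(x), 1 - G(x)) for all x, with ω > 0, and that f is symmetric about 0. Then for any η ∈ (0, 1/2), the (1-η)-quantile satisfies G^{-1}(1-η) ≤ (log(1/(2η)))/ω. -/
open MeasureTheory Set

/-- For a log-concave probability density `f` symmetric about `0` with distribution function `G`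
satisfying `f x ≥ ω · min(G x, 1 - G x)` for all `x` with `ω > 0`, the `(1-η)`-quantile of `G`
is at most `log(1/(2η))/ω` for any `η ∈ (0, 1/2)`. -/
theorem quantile_log_bound
    (f G : ℝ → ℝ) (ω η : ℝ)
    (hf0 : ∀ x, 0 ≤ f x)
    (hdens : (∫ x, f x) = 1)
    (hconc : ConcaveOn ℝ {x | 0 < f x} (fun x => Real.log (f x)))
    (hsym : ∀ x, f (-x) = f x)
    (hG : ∀ x, G x = ∫ t in Set.Iic x, f t)
    (hω : 0 < ω)
    (hbound : ∀ x, ω * min (G x) (1 - G x) ≤ f x)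
    (hη₀ : 0 < η) (hη₁ : η < 1 / 2) :
    sInf {x : ℝ | 1 - η ≤ G x} ≤ Real.log (1 / (2 * η)) / ω := by
  -- f is integrable
  have hInt : Integrable f := by
    by_contra h
    rw [integral_undef h] at hdens
    norm_num at hdens
  -- G is monotone
  have hmono : Monotone G := by
    intro a b hab
    rw [hG a, hG b]
    have h1 := intervalIntegral.integral_Iic_sub_Iic (μ := volume) (f := f)
      hInt.integrableOn hInt.integrableOn (a := a) (b := b)
    have h2 : 0 ≤ ∫ x in a..b, f x := by
      rw [intervalIntegral.integral_of_le hab]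
      exact setIntegral_nonneg measurableSet_Ioc (fun x _ => hf0 x)
    linarith
  -- G x ≤ 1 for all x
  have hGle : ∀ x, G x ≤ 1 := by
    intro x
    rw [hG x, ← hdens]
    exact setIntegral_le_integral hInt (Filter.Eventually.of_forall hf0)
  -- G 0 = 1/2
  have hG0 : G 0 = 1 / 2 := by
    have hs : (∫ x in Iic (0:ℝ), f x) = ∫ x in Ioi (0:ℝ), f x := by
      have h := integral_comp_neg_Iic (0:ℝ) f
      rw [neg_zero] at h
      rw [← h]
      exact setIntegral_congr_fun measurableSet_Iic (fun x _ => (hsym x).symm)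
    have hsplit : (∫ x in Iic (0:ℝ), f x) + (∫ x in Ioi (0:ℝ), f x) = 1 := by
      rw [← hdens]
      exact intervalIntegral.integral_Iic_add_Ioi hInt.integrableOn hInt.integrableOn
    rw [hG 0]; linarith
  -- key step: for 0 ≤ a ≤ b, (1 - G b) * (1 + ω * (b - a)) ≤ 1 - G a
  have hkey : ∀ a b : ℝ, 0 ≤ a → a ≤ b →
      (1 - G b) * (1 + ω * (b - a)) ≤ 1 - G a := by
    intro a b ha hab
    have hdiff : G b - G a = ∫ x in Ioc a b, f x := by
      rw [hG a, hG b,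
        intervalIntegral.integral_Iic_sub_Iic (μ := volume) hInt.integrableOn hInt.integrableOn,
        intervalIntegral.integral_of_le hab]
    have hlow : ∀ x ∈ Ioc a b, ω * (1 - G b) ≤ f x := by
      intro x hx
      have hx0 : (0:ℝ) ≤ x := le_trans ha hx.1.le
      have hGx : 1 / 2 ≤ G x := hG0 ▸ hmono hx0
      have hminx : min (G x) (1 - G x) = 1 - G x := min_eq_right (by linarith)
      have : 1 - G b ≤ 1 - G x := by have := hmono hx.2; linarith
      calc ω * (1 - G b) ≤ ω * (1 - G x) := by nlinarith
        _ = ω * min (G x) (1 - G x) := by rw [hminx]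
        _ ≤ f x := hbound x
    have hc : (∫ x in Ioc a b, (fun _ => ω * (1 - G b)) x) ≤ ∫ x in Ioc a b, f x := by
      apply setIntegral_mono_on
      · exact integrableOn_const measure_Ioc_lt_top.ne
      · exact hInt.integrableOn
      · exact measurableSet_Ioc
      · exact hlow
    rw [setIntegral_const] at hc
    rw [Real.volume_real_Ioc_of_le hab] at hc
    have : (b - a) * (ω * (1 - G b)) ≤ G b - G a := by
      rw [hdiff]; simpa [smul_eq_mul] using hc
    nlinarith
  -- set L := log(1/(2η))/ω
  set L := Real.log (1 / (2 * η)) / ω with hL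
  have h2η : 0 < 2 * η := by linarith
  have hlogpos : 0 ≤ Real.log (1 / (2 * η)) := by
    apply Real.log_nonneg
    rw [le_div_iff₀ h2η]; linarith
  have hL0 : 0 ≤ L := div_nonneg hlogpos hω.le
  -- by induction: (1 - G L) * (1 + ω*L/n)^n ≤ 1/2 for n ≥ 1
  have hind : ∀ n : ℕ, 1 ≤ n → (1 - G L) * (1 + ω * L / n) ^ n ≤ 1 / 2 := by
    intro n hn
    set δ := L / n with hδ
    have hnpos : (0:ℝ) < n := by exact_mod_cast hn
    have hδ0 : 0 ≤ δ := div_nonneg hL0 hnpos.le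
    have step : ∀ k : ℕ, k ≤ n → (1 - G (k * δ)) * (1 + ω * δ) ^ k ≤ 1 / 2 := by
      intro k
      induction k with
      | zero => intro _; norm_num [hG0]
      | succ m ih =>
        intro hm
        have hm' : m ≤ n := Nat.le_of_succ_le hm
        have ha : (0:ℝ) ≤ m * δ := mul_nonneg (Nat.cast_nonneg m) hδ0
        have hab : (m:ℝ) * δ ≤ (m + 1 : ℕ) * δ := by
          have : (m:ℝ) ≤ (m+1:ℕ) := by push_cast; linarith
          exact mul_le_mul_of_nonneg_right this hδ0
        have hk := hkey (m * δ) ((m+1:ℕ) * δ) ha hab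
        have hbsub : ((m+1:ℕ):ℝ) * δ - m * δ = δ := by push_cast; ring
        rw [hbsub] at hk
        have hpow : (0:ℝ) ≤ (1 + ω * δ) ^ m := by positivity
        calc (1 - G ((m+1:ℕ) * δ)) * (1 + ω * δ) ^ (m+1)
            = ((1 - G ((m+1:ℕ) * δ)) * (1 + ω * δ)) * (1 + ω * δ) ^ m := by ring
          _ ≤ (1 - G (m * δ)) * (1 + ω * δ) ^ m := mul_le_mul_of_nonneg_right hk hpow
          _ ≤ 1 / 2 := ih hm'
    have := step n le_rfl
    have hnδ : (n:ℝ) * δ = L := by rw [hδ, mul_div_assoc', mul_div_cancel_left₀ _ hnpos.ne']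
    rw [hnδ] at this
    convert this using 3
    rw [hδ]; ring
  -- take the limit n → ∞ : (1 + ωL/n)^n → exp(ωL)
  have htend : Filter.Tendsto (fun n : ℕ => (1 - G L) * (1 + ω * L / n) ^ n)
      Filter.atTop (nhds ((1 - G L) * Real.exp (ω * L))) :=
    (Real.tendsto_one_add_div_pow_exp (ω * L)).const_mul _
  have hlim : (1 - G L) * Real.exp (ω * L) ≤ 1 / 2 := by
    apply le_of_tendsto htend
    filter_upwards [Filter.eventually_ge_atTop 1] with n hn using hind n hn
  have hexp : Real.exp (ω * L) = 1 / (2 * η) := by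
    rw [hL]
    rw [mul_div_cancel₀ _ (ne_of_gt hω)]
    exact Real.exp_log (by positivity)
  rw [hexp] at hlim
  have hGL : 1 - η ≤ G L := by
    have h1 : 1 - G L ≤ η := by
      rw [mul_one_div, div_le_iff₀ h2η] at hlim
      linarith
    linarith
  -- conclude
  have hmem : L ∈ {x : ℝ | 1 - η ≤ G x} := hGL
  have hbdd : BddBelow {x : ℝ | 1 - η ≤ G x} := by
    refine ⟨0, fun x hx => ?_⟩
    by_contra hx0
    push_neg at hx0
    have : G x ≤ 1 / 2 := hG0 ▸ hmono hx0.le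
    have : (1:ℝ) - η ≤ 1/2 := le_trans hx this
    linarith
  exact csInf_le hbdd hmem
end

section
/- Let ψ be a concave function symmetric about 0 with e^ψ a probability density, and let F be a distribution function with finite first moment. If θ_k → ±∞ (|θ_k| → ∞), then limsup_k [∫ ψ(x - θ_k) dF(x) - 1] = -∞. In particular the location log-likelihood criterion Ψ(θ, ψ) = ∫ ψ(x-θ) dF(x) - ∫ e^{ψ(x)} dx tends to -∞ uniformly over such ψ as |θ| → ∞. -/
open MeasureTheory Set Filter
open scoped ENNReal

/-- A concave even function is nonincreasing in `|·|`. -/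
lemma phi_mono_abs {φ : ℝ → ℝ} (hsym : ∀ z, φ (-z) = φ z)
    (hconc : ConcaveOn ℝ Set.univ φ) {x y : ℝ} (h : |x| ≤ |y|) :
    φ y ≤ φ x := by
  have habs : ∀ w : ℝ, φ |w| = φ w := by
    intro w
    rcases le_or_gt 0 w with hw | hw
    · rw [abs_of_nonneg hw]
    · rw [abs_of_neg hw, hsym]
  have key : ∀ a b : ℝ, 0 ≤ a → a ≤ b → φ b ≤ φ a := by
    intro a b ha hab
    rcases eq_or_lt_of_le (ha.trans hab) with hb | hb
    · have : a = b := le_antisymm hab (hb ▸ ha)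
      rw [this]
    · have hb2 : (0:ℝ) < 2 * b := by linarith
      have hl : (0:ℝ) ≤ (b - a) / (2 * b) := div_nonneg (by linarith) hb2.le
      have hm : (0:ℝ) ≤ (b + a) / (2 * b) := div_nonneg (by linarith) hb2.le
      have hsum : (b - a) / (2 * b) + (b + a) / (2 * b) = 1 := by
        field_simp
        ring
      have := hconc.2 (mem_univ (-b)) (mem_univ b) hl hm hsum
      simp only [smul_eq_mul] at this
      have harg : (b - a) / (2 * b) * (-b) + (b + a) / (2 * b) * b = a := by
        field_simp
        ring
      rw [harg, hsym] at this
      have h2 : ((b - a) / (2 * b) + (b + a) / (2 * b)) * φ b ≤ φ a := by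
        rw [add_mul]; exact this
      rw [hsum, one_mul] at h2
      exact h2
  calc φ y = φ |y| := (habs y).symm
    _ ≤ φ |x| := key _ _ (abs_nonneg x) h
    _ = φ x := habs x

/-- `e^φ` is integrable (since its integral is `1 ≠ 0`). -/
lemma phi_exp_integrable {φ : ℝ → ℝ} (hnorm : (∫ z, Real.exp (φ z)) = 1) :
    Integrable (fun z => Real.exp (φ z)) := by
  by_contra h
  rw [integral_undef h] at hnorm
  norm_num at hnorm

/-- Pointwise bound `φ(z) ≤ -log(2z)` for `z > 0`. -/
lemma phi_le_neg_log {φ : ℝ → ℝ} (hsym : ∀ z, φ (-z) = φ z)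
    (hconc : ConcaveOn ℝ Set.univ φ)
    (hnorm : (∫ z, Real.exp (φ z)) = 1) {z : ℝ} (hz : 0 < z) :
    φ z ≤ -Real.log (2 * z) := by
  have hint := phi_exp_integrable hnorm
  have h1 : ∫ x in Ioc (-z) z, Real.exp (φ z) ≤ ∫ x in Ioc (-z) z, Real.exp (φ x) := by
    apply setIntegral_mono_on
    · exact integrableOn_const measure_Ioc_lt_top.ne
    · exact hint.integrableOn
    · exact measurableSet_Ioc
    · intro x hx
      apply Real.exp_le_exp.2
      apply phi_mono_abs hsym hconc
      rw [abs_of_pos hz]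
      rw [abs_le]
      exact ⟨hx.1.le, hx.2⟩
  have h2 : ∫ x in Ioc (-z) z, Real.exp (φ x) ≤ ∫ x, Real.exp (φ x) :=
    setIntegral_le_integral hint (ae_of_all _ fun x => (Real.exp_pos _).le)
  have h3 : ∫ x in Ioc (-z) z, Real.exp (φ z) = (2 * z) * Real.exp (φ z) := by
    rw [setIntegral_const, measureReal_def, Real.volume_Ioc, smul_eq_mul, ENNReal.toReal_ofReal (by linarith)]
    ring_nf
  have hkey : (2 * z) * Real.exp (φ z) ≤ 1 := by
    rw [← hnorm]
    calc (2 * z) * Real.exp (φ z) = ∫ x in Ioc (-z) z, Real.exp (φ z) := h3.symm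
      _ ≤ ∫ x in Ioc (-z) z, Real.exp (φ x) := h1
      _ ≤ ∫ x, Real.exp (φ x) := h2
  have hz2 : (0:ℝ) < 2 * z := by linarith
  have hexp : Real.exp (φ z) ≤ 1 / (2 * z) := by
    rw [le_div_iff₀ hz2]
    linarith
  have := Real.log_le_log (Real.exp_pos _) hexp
  rwa [Real.log_exp, one_div, Real.log_inv] at this

/-- The key uniform bound. -/
lemma key_bound (μ : Measure ℝ) [IsProbabilityMeasure μ] (M : ℝ) :
    ∃ R : ℝ, ∀ t : ℝ, R < |t| →
      ∀ φ : ℝ → ℝ, (∀ z, φ (-z) = φ z) → ConcaveOn ℝ Set.univ φ →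
        (∫ z, Real.exp (φ z)) = 1 → Integrable (fun x => φ (x - t)) μ →
        (∫ x, φ (x - t) ∂μ) - (∫ z, Real.exp (φ z)) < M := by
  -- choose R₀ capturing half the mass
  obtain ⟨n, hn⟩ : ∃ n : ℕ, (1/2 : ℝ≥0∞) ≤ μ (Icc (-(n:ℝ)) n) := by
    have hmono : Monotone (fun n : ℕ => Icc (-(n:ℝ)) n) := by
      intro m n hmn
      apply Icc_subset_Icc <;> simp [Nat.cast_le.2 hmn] <;> exact_mod_cast hmn
    have hU : (⋃ n : ℕ, Icc (-(n:ℝ)) n) = univ := by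
      ext x
      simp only [mem_iUnion, mem_Icc, mem_univ, iff_true]
      obtain ⟨n, hn⟩ := exists_nat_ge |x|
      exact ⟨n, by cases abs_cases x <;> linarith, by cases abs_cases x <;> linarith⟩
    have := tendsto_measure_iUnion_atTop (μ := μ) hmono
    rw [hU, measure_univ] at this
    have := this.eventually (lt_mem_nhds (by norm_num : (1/2 : ℝ≥0∞) < 1))
    exact this.exists.imp fun n hn => hn.le
  set R₀ : ℝ := (n : ℝ) with hR₀def
  have hR₀ : (0:ℝ) ≤ R₀ := Nat.cast_nonneg n
  set z : ℝ := Real.exp (2 * (1 + |M|)) with hzdef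
  have hz1 : (1:ℝ) < z := by
    rw [hzdef, show (1:ℝ) = Real.exp 0 from (Real.exp_zero).symm]
    apply Real.exp_lt_exp.2
    positivity
  have hz0 : (0:ℝ) < z := by linarith
  have hlogz : Real.log z = 2 * (1 + |M|) := by rw [hzdef, Real.log_exp]
  refine ⟨R₀ + z, ?_⟩
  intro t ht φ hsym hconc hnorm hint
  rw [hnorm]
  set s : Set ℝ := Ioo (t - z) (t + z) with hsdef
  have hms : MeasurableSet s := measurableSet_Ioo
  -- Icc (-R₀) R₀ ⊆ sᶜ
  have hIs : Icc (-R₀) R₀ ⊆ sᶜ := by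
    intro x hx hxs
    rw [hsdef, mem_Ioo] at hxs
    have h1 : |x - t| < z := by
      rw [abs_lt]; constructor <;> linarith [hxs.1, hxs.2]
    have h2 : |x| ≤ R₀ := abs_le.2 ⟨hx.1, hx.2⟩
    have : R₀ + z < |t| := ht
    have := abs_sub_abs_le_abs_sub t x
    rw [abs_sub_comm t x] at this
    linarith
  -- measure bookkeeping
  set a : ℝ := (μ s).toReal with hadef
  set b : ℝ := (μ sᶜ).toReal with hbdef
  have hab : a + b = 1 := by
    rw [hadef, hbdef, ← ENNReal.toReal_add (measure_ne_top _ _) (measure_ne_top _ _),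
      measure_add_measure_compl hms, measure_univ, ENNReal.toReal_one]
  have ha0 : 0 ≤ a := ENNReal.toReal_nonneg
  have hb2 : (1/2 : ℝ) ≤ b := by
    have h1 : (1/2 : ℝ≥0∞) ≤ μ sᶜ := le_trans hn (measure_mono hIs)
    have := ENNReal.toReal_mono (measure_ne_top _ _) h1
    simpa using this
  have ha2 : a ≤ 1/2 := by linarith
  -- pointwise bounds
  have hφz : φ z ≤ -Real.log (2 * z) := phi_le_neg_log hsym hconc hnorm hz0
  have hφzneg : φ z ≤ 0 := by
    have : (1:ℝ) ≤ 2 * z := by linarith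
    have := Real.log_nonneg this
    linarith
  have hmid : φ z ≤ -2 * Real.log z - φ 0 := by
    have hc := hconc.2 (mem_univ (0:ℝ)) (mem_univ z) (by norm_num : (0:ℝ) ≤ 1/2)
      (by norm_num : (0:ℝ) ≤ 1/2) (by norm_num)
    simp only [smul_eq_mul, mul_zero, zero_add] at hc
    have hhalf : φ (1/2 * z) ≤ -Real.log (2 * (1/2 * z)) :=
      phi_le_neg_log hsym hconc hnorm (by linarith)
    have : 2 * (1/2 * z) = z := by ring
    rw [this] at hhalf
    linarith
  -- integral split
  have hsplit : (∫ x in s, φ (x - t) ∂μ) + (∫ x in sᶜ, φ (x - t) ∂μ) = ∫ x, φ (x - t) ∂μ :=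
    integral_add_compl hms hint
  have h1 : ∫ x in s, φ (x - t) ∂μ ≤ a * φ 0 := by
    have : ∫ x in s, φ (x - t) ∂μ ≤ ∫ x in s, φ 0 ∂μ := by
      apply setIntegral_mono_on hint.integrableOn
        (integrableOn_const (measure_lt_top _ _).ne) hms
      intro x _
      exact phi_mono_abs hsym hconc (by simp [abs_nonneg])
    rwa [setIntegral_const, smul_eq_mul] at this
  have h2 : ∫ x in sᶜ, φ (x - t) ∂μ ≤ b * φ z := by
    have : ∫ x in sᶜ, φ (x - t) ∂μ ≤ ∫ x in sᶜ, φ z ∂μ := by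
      apply setIntegral_mono_on hint.integrableOn
        (integrableOn_const (measure_lt_top _ _).ne) hms.compl
      intro x hx
      apply phi_mono_abs hsym hconc
      rw [abs_of_pos hz0]
      by_contra hlt
      push_neg at hlt
      exact hx (by rw [hsdef, mem_Ioo]; rcases abs_lt.1 hlt with ⟨u, v⟩; constructor <;> linarith)
    rwa [setIntegral_const, smul_eq_mul] at this
  have htot : ∫ x, φ (x - t) ∂μ ≤ a * φ 0 + b * φ z := by
    rw [← hsplit]; linarith
  have habsM : -|M| ≤ M := neg_abs_le M
  rcases le_or_gt 0 (φ 0) with hA | hA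
  · -- φ 0 ≥ 0
    have e1 : a * φ 0 ≤ (1/2) * φ 0 := mul_le_mul_of_nonneg_right ha2 hA
    have e2 : b * φ z ≤ (1/2) * φ z := mul_le_mul_of_nonpos_right hb2 hφzneg
    nlinarith [hmid, hlogz, abs_nonneg M]
  · -- φ 0 < 0
    have e1 : a * φ 0 ≤ 0 := mul_nonpos_of_nonneg_of_nonpos ha0 hA.le
    have e2 : b * φ z ≤ (1/2) * φ z := mul_le_mul_of_nonpos_right hb2 hφzneg
    have hlog2z : Real.log z ≤ Real.log (2 * z) := Real.log_le_log hz0 (by linarith)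
    nlinarith [hφz, hlogz, abs_nonneg M]

/-- For `ψ` concave, symmetric about `0`, with `∫ e^ψ = 1`, and `F` a non-degenerate
distribution with finite first moment: if `|θ_k| → ∞` then
`limsup_k [∫ ψ(x - θ_k) dF(x) - 1] = -∞` (the expression tends to `-∞`); in particular the
criterion `Ψ(θ,ψ) = ∫ ψ(x-θ) dF - ∫ e^ψ` tends to `-∞` uniformly over such `ψ` as `|θ| → ∞`. -/
theorem location_criterion_tendsto_atBot
    (μ : Measure ℝ) [IsProbabilityMeasure μ]
    (hmom : Integrable (fun x => |x|) μ)
    (hnd : ∀ c : ℝ, μ ≠ Measure.dirac c)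
    (θ : ℕ → ℝ) (hθ : Tendsto (fun k => |θ k|) atTop atTop)
    (ψ : ℝ → ℝ)
    (hψsym : ∀ z, ψ (-z) = ψ z)
    (hψconc : ConcaveOn ℝ Set.univ ψ)
    (hψnorm : (∫ z, Real.exp (ψ z)) = 1)
    (hψint : ∀ k, Integrable (fun x => ψ (x - θ k)) μ) :
    Tendsto (fun k => (∫ x, ψ (x - θ k) ∂μ) - 1) atTop atBot ∧
    ∀ M : ℝ, ∃ R : ℝ, ∀ t : ℝ, R < |t| →
      ∀ φ : ℝ → ℝ, (∀ z, φ (-z) = φ z) → ConcaveOn ℝ Set.univ φ →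
        (∫ z, Real.exp (φ z)) = 1 → Integrable (fun x => φ (x - t)) μ →
        (∫ x, φ (x - t) ∂μ) - (∫ z, Real.exp (φ z)) < M := by
  constructor
  · rw [tendsto_atBot]
    intro M
    obtain ⟨R, hR⟩ := key_bound μ M
    filter_upwards [hθ.eventually_gt_atTop R] with k hk
    have := hR (θ k) hk ψ hψsym hψconc hψnorm (hψint k)
    rw [hψnorm] at this
    linarith
  · exact key_bound μ
end
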